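/- Let E_1,…,E_n be pairwise disjoint measurable subsets of [0,1]^d of measure 1/n each with ∪E_i of full measure and each of diameter at most 2√(d+3)n^{−1/d}. Let f = g·1_Ω where g is Lipschitz and bounded by D on [0,1]^d and ∂Ω has finite (d−1)-dimensional Minkowski content. With x_i independent and uniform on E_i, the estimator μ̂ = (1/n)Σ_i f(x_i) satisfies Var[μ̂] = O(n^{−1−1/d}). -/

import Mathlib

open MeasureTheory ProbabilityTheory Filter
open scoped ENNReal

/-- A preconnected set meeting both `S` and `Sᶜ` meets `frontier S`. -/
lemma aux_preconnected_inter_frontier {X : Type*} [TopologicalSpace X] {t S : Set X}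
    (ht : IsPreconnected t) (h1 : (t ∩ S).Nonempty) (h2 : (t ∩ Sᶜ).Nonempty) :
    (t ∩ frontier S).Nonempty := by
  by_contra h
  rw [Set.not_nonempty_iff_eq_empty] at h
  have hsub : t ⊆ interior S ∪ (closure S)ᶜ := by
    intro x hx
    have hxf : x ∉ frontier S := fun hf => Set.eq_empty_iff_forall_notMem.1 h x ⟨hx, hf⟩
    by_cases hc : x ∈ closure S
    · left; by_contra hi; exact hxf ⟨hc, hi⟩
    · right; exact hc
  obtain ⟨u, hut, huS⟩ := h1
  obtain ⟨v, hvt, hvS⟩ := h2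
  have hu' : (t ∩ interior S).Nonempty := by
    refine ⟨u, hut, ?_⟩
    rcases hsub hut with h' | h'
    · exact h'
    · exact absurd (subset_closure huS) h'
  have hv' : (t ∩ (closure S)ᶜ).Nonempty := by
    refine ⟨v, hvt, ?_⟩
    rcases hsub hvt with h' | h'
    · exact absurd (interior_subset h') hvS
    · exact h'
  obtain ⟨x, -, hx1, hx2⟩ := ht _ _ isOpen_interior isClosed_closure.isOpen_compl hsub hu' hv'
  exact hx2 (subset_closure (interior_subset hx1))

/-- If a set of diameter `≤ δ` meets both `S` and `Sᶜ`, it lies in the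
`2δ`-cthickening of `frontier S`. -/
lemma aux_subset_cthickening {E : Type*} [NormedAddCommGroup E] [NormedSpace ℝ E]
    {A S : Set E} {δ : ℝ} (hAb : Bornology.IsBounded A) (hdiam : Metric.diam A ≤ δ)
    (h1 : (A ∩ S).Nonempty) (h2 : (A ∩ Sᶜ).Nonempty) :
    A ⊆ Metric.cthickening (2 * δ) (frontier S) := by
  obtain ⟨u, huA, huS⟩ := h1
  obtain ⟨v, hvA, hvS⟩ := h2
  obtain ⟨p, hpseg, hpf⟩ := aux_preconnected_inter_frontier
    (convex_segment u v).isPreconnected ⟨u, left_mem_segment ℝ u v, huS⟩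
    ⟨v, right_mem_segment ℝ u v, hvS⟩
  have hup : dist u p ≤ δ := by
    have hseg : segment ℝ u v ⊆ Metric.closedBall u (dist u v) :=
      (convex_closedBall u (dist u v)).segment_subset (Metric.mem_closedBall_self dist_nonneg)
        (by simpa [Metric.mem_closedBall] using dist_comm v u ▸ le_refl (dist v u))
    have this : dist p u ≤ dist u v := hseg hpseg
    calc dist u p = dist p u := dist_comm u p
    _ ≤ dist u v := this
    _ ≤ Metric.diam A := Metric.dist_le_diam_of_mem hAb huA hvA
    _ ≤ δ := hdiam
  intro w hwA
  apply Metric.mem_cthickening_of_dist_le w p _ _ hpf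
  calc dist w p ≤ dist w u + dist u p := dist_triangle w u p
  _ ≤ Metric.diam A + δ := add_le_add (Metric.dist_le_diam_of_mem hAb hwA huA) hup
  _ ≤ 2 * δ := by linarith

set_option maxHeartbeats 1000000 in
/-- Variance bound `O(n^{-1-1/d})` for the stratified estimator of a
discontinuous integrand `f = g·1_Ω` with Lipschitz `g` and `∂Ω` of finite
`(d-1)`-dimensional Minkowski content. -/
theorem stratified_variance_indicator (d : ℕ) (hd : 1 ≤ d)
    (S : Set (EuclideanSpace ℝ (Fin d)))
    (hS : S ⊆ {y : EuclideanSpace ℝ (Fin d) | ∀ j, y j ∈ Set.Icc (0 : ℝ) 1})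
    (hSmeas : MeasurableSet S)
    (MC : ℝ)
    (hMC : Tendsto (fun ε : ℝ =>
        (volume (Metric.cthickening ε (frontier S))).toReal / (2 * ε))
      (nhdsWithin 0 (Set.Ioi 0)) (nhds MC))
    (g : EuclideanSpace ℝ (Fin d) → ℝ) (hgm : Measurable g) (M D : ℝ)
    (hLip : ∀ u v, |g u - g v| ≤ M * ‖u - v‖)
    (hbdd : ∀ u ∈ {y : EuclideanSpace ℝ (Fin d) | ∀ j, y j ∈ Set.Icc (0 : ℝ) 1}, |g u| ≤ D) :
    ∃ C : ℝ, ∀ n : ℕ, 0 < n →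
      ∀ (Ω' : Type) (_ : MeasureSpace Ω'), IsProbabilityMeasure (ℙ : Measure Ω') →
      ∀ E : Fin n → Set (EuclideanSpace ℝ (Fin d)),
        (∀ i, MeasurableSet (E i)) →
        (∀ i, E i ⊆ {y : EuclideanSpace ℝ (Fin d) | ∀ j, y j ∈ Set.Icc (0 : ℝ) 1}) →
        Pairwise (Function.onFun Disjoint E) →
        (∀ i, volume (E i) = 1 / n) →
        volume ({y : EuclideanSpace ℝ (Fin d) | ∀ j, y j ∈ Set.Icc (0 : ℝ) 1}
          \ ⋃ i, E i) = 0 →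
        (∀ i, Metric.diam (E i) ≤ 2 * Real.sqrt (d + 3) * (n : ℝ) ^ (-(1 : ℝ) / d)) →
        ∀ x : Fin n → Ω' → EuclideanSpace ℝ (Fin d),
          iIndepFun x ℙ →
          (∀ i, Measure.map (x i) ℙ = (n : ℝ≥0∞) • volume.restrict (E i)) →
          variance (fun ω => (1 / (n : ℝ)) * ∑ i, Set.indicator S g (x i ω)) ℙ
            ≤ C * (n : ℝ) ^ (-(1 : ℝ) - 1 / d) := by
  classical
  -- basic positivity facts
  have hD : 0 ≤ D := by
    have h0Q : (0 : EuclideanSpace ℝ (Fin d)) ∈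
        {y : EuclideanSpace ℝ (Fin d) | ∀ j, y j ∈ Set.Icc (0 : ℝ) 1} := by
      intro j; simp [Set.mem_Icc]
    exact le_trans (abs_nonneg _) (hbdd 0 h0Q)
  have hM : 0 ≤ M := by
    have h := hLip 0 (EuclideanSpace.single ⟨0, hd⟩ (1 : ℝ))
    have hn : ‖(0 : EuclideanSpace ℝ (Fin d)) - EuclideanSpace.single ⟨0, hd⟩ (1 : ℝ)‖ = 1 := by
      rw [zero_sub, norm_neg, EuclideanSpace.norm_single]; norm_num
    rw [hn, mul_one] at h
    exact le_trans (abs_nonneg _) h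
  have hdpos : (0 : ℝ) < 1 / d := by
    have : (0 : ℝ) < d := by exact_mod_cast hd
    positivity
  have hsd : (0 : ℝ) < Real.sqrt (d + 3) := Real.sqrt_pos.2 (by positivity)
  have hsd2 : Real.sqrt ((d : ℝ) + 3) ^ 2 = (d : ℝ) + 3 := Real.sq_sqrt (by positivity)
  -- the cube is bounded
  have hQb : Bornology.IsBounded
      {y : EuclideanSpace ℝ (Fin d) | ∀ j, y j ∈ Set.Icc (0 : ℝ) 1} := by
    have hsub : {y : EuclideanSpace ℝ (Fin d) | ∀ j, y j ∈ Set.Icc (0 : ℝ) 1}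
        ⊆ Metric.closedBall 0 (Real.sqrt d) := by
      intro y hy
      rw [Metric.mem_closedBall, dist_zero_right, EuclideanSpace.norm_eq]
      apply Real.sqrt_le_sqrt
      calc ∑ i, ‖y i‖ ^ 2 ≤ ∑ _i : Fin d, (1 : ℝ) := by
            apply Finset.sum_le_sum
            intro i _
            have hyi := hy i
            rw [Set.mem_Icc] at hyi
            have habs : |y i| ≤ 1 := abs_le.2 ⟨by linarith [hyi.1], hyi.2⟩
            calc ‖y i‖ ^ 2 = |y i| ^ 2 := by rw [Real.norm_eq_abs]
            _ ≤ 1 ^ 2 := by nlinarith [abs_nonneg (y i)]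
            _ = 1 := one_pow 2
      _ = (d : ℝ) := by simp
    exact Metric.isBounded_closedBall.subset hsub
  have hFb : Bornology.IsBounded (frontier S) :=
    ((hQb.subset hS).closure).subset frontier_subset_closure
  -- extract ε₀ from the Minkowski content hypothesis
  have hMClt : ∀ᶠ ε in nhdsWithin 0 (Set.Ioi 0),
      (volume (Metric.cthickening ε (frontier S))).toReal / (2 * ε) < |MC| + 1 :=
    hMC.eventually_lt_const (by linarith [le_abs_self MC])
  obtain ⟨ε₀, hε₀pos, hε₀⟩ : ∃ ε₀ > 0, ∀ ε : ℝ, 0 < ε → ε < ε₀ →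
      (volume (Metric.cthickening ε (frontier S))).toReal ≤ (|MC| + 1) * (2 * ε) := by
    rw [eventually_nhdsWithin_iff, Metric.eventually_nhds_iff] at hMClt
    obtain ⟨ε₀, hε₀pos, h⟩ := hMClt
    refine ⟨ε₀, hε₀pos, fun ε hε hεlt => ?_⟩
    have h2 : (0 : ℝ) < 2 * ε := by linarith
    have h3 := h (show dist ε 0 < ε₀ by rwa [Real.dist_eq, sub_zero, abs_of_pos hε]) hε
    exact le_of_lt ((div_lt_iff₀ h2).1 h3)
  -- threshold N₀
  have htend : Tendsto (fun n : ℕ => 4 * Real.sqrt (d + 3) * (n : ℝ) ^ (-(1 : ℝ) / d))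
      atTop (nhds 0) := by
    have h1 : Tendsto (fun x : ℝ => x ^ (-((1 : ℝ) / d))) atTop (nhds 0) :=
      tendsto_rpow_neg_atTop hdpos
    have h2 : Tendsto (fun n : ℕ => ((n : ℝ)) ^ (-((1 : ℝ) / d))) atTop (nhds 0) :=
      h1.comp tendsto_natCast_atTop_atTop
    have h3 := h2.const_mul (4 * Real.sqrt (d + 3))
    simpa [neg_div] using h3
  obtain ⟨N₀, hN₀⟩ := eventually_atTop.1 (htend.eventually_lt_const hε₀pos)
  -- the constant
  set C₁ : ℝ := 8 * (|MC| + 1) * Real.sqrt (d + 3) * D ^ 2 + 4 * M ^ 2 * ((d : ℝ) + 3) with hC₁def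
  have hC₁0 : 0 ≤ C₁ := by positivity
  refine ⟨C₁ + D ^ 2 * ((N₀ : ℝ)) ^ ((1 : ℝ) / d), ?_⟩
  intro n hn Ω' mΩ' hprob E hEmeas hEQ hdisj hvolE hfull hdiam x hindep hmap
  haveI := hprob
  have hn0 : (0 : ℝ) < n := by exact_mod_cast hn
  set ν : ℝ := (n : ℝ) ^ (-(1 : ℝ) / d) with hν
  have hν0 : 0 < ν := Real.rpow_pos_of_pos hn0 _
  have hν1 : ν ≤ 1 :=
    Real.rpow_le_one_of_one_le_of_nonpos (by exact_mod_cast hn)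
      (by rw [neg_div]; exact neg_nonpos.2 hdpos.le)
  have hν2 : ν ^ 2 ≤ ν := by nlinarith
  set δ : ℝ := 2 * Real.sqrt (d + 3) * ν with hδdef
  have hδ0 : 0 < δ := by positivity
  have hexp : (n : ℝ) ^ (-(1 : ℝ) - 1 / d) = (1 / (n : ℝ)) * ν := by
    rw [show (-(1 : ℝ) - 1 / (d : ℝ)) = (-1) + (-(1 : ℝ) / d) by ring, Real.rpow_add hn0,
      Real.rpow_neg_one, hν, one_div]
  -- the integrand
  set f : EuclideanSpace ℝ (Fin d) → ℝ := S.indicator g with hfdef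
  have hfm : Measurable f := hgm.indicator hSmeas
  have hfb : ∀ y ∈ {y : EuclideanSpace ℝ (Fin d) | ∀ j, y j ∈ Set.Icc (0 : ℝ) 1},
      |f y| ≤ D := by
    intro y hy
    by_cases hyS : y ∈ S
    · rw [hfdef, Set.indicator_of_mem hyS]; exact hbdd y hy
    · rw [hfdef, Set.indicator_of_notMem hyS]; simpa using hD
  -- a.e.-measurability of the samples
  have hnE : ((n : ℝ≥0∞)) * (1 / (n : ℝ≥0∞)) = 1 := by
    rw [mul_one_div, ENNReal.div_self (by exact_mod_cast hn.ne' : (n : ℝ≥0∞) ≠ 0)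
      (ENNReal.natCast_ne_top n)]
  have haem : ∀ i, AEMeasurable (x i) (ℙ : Measure Ω') := by
    intro i
    by_contra h
    have h0 := Measure.map_of_not_aemeasurable (μ := (ℙ : Measure Ω')) h
    rw [hmap i] at h0
    have h1 : ((n : ℝ≥0∞) • volume.restrict (E i)) Set.univ = 0 := by rw [h0]; rfl
    rw [Measure.smul_apply, smul_eq_mul, Measure.restrict_apply_univ, hvolE i, hnE] at h1
    exact one_ne_zero h1
  -- the samples live in their cells a.s.
  have haeE : ∀ i, ∀ᵐ ω ∂(ℙ : Measure Ω'), x i ω ∈ E i := by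
    intro i
    have h1 : (ℙ : Measure Ω') (x i ⁻¹' (E i)ᶜ) = 0 := by
      have h2 := Measure.map_apply_of_aemeasurable (haem i) (hEmeas i).compl
      rw [hmap i] at h2
      rw [← h2, Measure.smul_apply, smul_eq_mul, Measure.restrict_apply (hEmeas i).compl]
      simp
    exact ae_iff.2 h1
  set Y : Fin n → Ω' → ℝ := fun i => f ∘ x i with hYdef
  have haeY : ∀ i, AEMeasurable (Y i) (ℙ : Measure Ω') :=
    fun i => hfm.comp_aemeasurable (haem i)
  have haeIcc : ∀ i, ∀ᵐ ω ∂(ℙ : Measure Ω'), Y i ω ∈ Set.Icc (-D) D := by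
    intro i
    filter_upwards [haeE i] with ω hω
    have := hfb _ (hEQ i hω)
    exact abs_le.1 this
  have hmem : ∀ i, MemLp (Y i) 2 (ℙ : Measure Ω') := fun i =>
    memLp_of_bounded (haeIcc i) (haeY i).aestronglyMeasurable 2
  -- uniform variance bound
  have hvarD : ∀ i, variance (Y i) (ℙ : Measure Ω') ≤ D ^ 2 := by
    intro i
    calc variance (Y i) (ℙ : Measure Ω') ≤ ((D - (-D)) / 2) ^ 2 :=
          variance_le_sq_of_bounded (haeIcc i) (haeY i)
    _ = D ^ 2 := by ring
  -- boundary cells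
  set B : Finset (Fin n) := Finset.univ.filter
    (fun i => (E i ∩ S).Nonempty ∧ (E i ∩ Sᶜ).Nonempty) with hBdef
  -- interior cells: small variance
  have hvarI : ∀ i ∉ B, variance (Y i) (ℙ : Measure Ω') ≤ M ^ 2 * δ ^ 2 := by
    intro i hiB
    rw [hBdef, Finset.mem_filter] at hiB
    push_neg at hiB
    have hiB' := hiB (Finset.mem_univ i)
    have hMδ : 0 ≤ M * δ := mul_nonneg hM hδ0.le
    have hEb : Bornology.IsBounded (E i) := hQb.subset (hEQ i)
    by_cases hcase : (E i ∩ S).Nonempty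
    · -- E i ⊆ S : use the Lipschitz bound
      have hempty : E i ∩ Sᶜ = ∅ := hiB' hcase
      have hsub : E i ⊆ S := by
        intro y hy
        by_contra hyS
        exact Set.eq_empty_iff_forall_notMem.1 hempty y ⟨hy, hyS⟩
      obtain ⟨u₀, hu₀E, -⟩ := hcase
      have hbound : ∀ᵐ ω ∂(ℙ : Measure Ω'),
          Y i ω ∈ Set.Icc (g u₀ - M * δ) (g u₀ + M * δ) := by
        filter_upwards [haeE i] with ω hω
        have hYg : Y i ω = g (x i ω) := by
          show f (x i ω) = g (x i ω)
          rw [hfdef, Set.indicator_of_mem (hsub hω)]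
        have hdist : ‖x i ω - u₀‖ ≤ δ := by
          rw [← dist_eq_norm]
          calc dist (x i ω) u₀ ≤ Metric.diam (E i) :=
                Metric.dist_le_diam_of_mem hEb hω hu₀E
          _ ≤ δ := by rw [hδdef, hν]; exact hdiam i
        have habs : |g (x i ω) - g u₀| ≤ M * δ :=
          le_trans (hLip (x i ω) u₀) (mul_le_mul_of_nonneg_left hdist hM)
        rw [abs_le] at habs
        rw [hYg]
        constructor <;> [linarith [habs.1]; linarith [habs.2]]
      calc variance (Y i) (ℙ : Measure Ω')
          ≤ ((g u₀ + M * δ - (g u₀ - M * δ)) / 2) ^ 2 :=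
            variance_le_sq_of_bounded hbound (haeY i)
      _ = M ^ 2 * δ ^ 2 := by ring
    · -- E i ∩ S = ∅ : the integrand vanishes on the cell
      have hempty : E i ∩ S = ∅ := Set.not_nonempty_iff_eq_empty.1 hcase
      have hbound : ∀ᵐ ω ∂(ℙ : Measure Ω'),
          Y i ω ∈ Set.Icc (-(M * δ)) (M * δ) := by
        filter_upwards [haeE i] with ω hω
        have hnotS : x i ω ∉ S := fun hS' =>
          Set.eq_empty_iff_forall_notMem.1 hempty (x i ω) ⟨hω, hS'⟩
        have hY0 : Y i ω = 0 := by
          show f (x i ω) = 0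
          rw [hfdef, Set.indicator_of_notMem hnotS]
        rw [hY0]
        exact ⟨by linarith, hMδ⟩
      calc variance (Y i) (ℙ : Measure Ω')
          ≤ ((M * δ - -(M * δ)) / 2) ^ 2 := variance_le_sq_of_bounded hbound (haeY i)
      _ = M ^ 2 * δ ^ 2 := by ring
  -- sum of variances
  have hsum : ∑ i, variance (Y i) (ℙ : Measure Ω')
      ≤ (B.card : ℝ) * D ^ 2 + (n : ℝ) * (M ^ 2 * δ ^ 2) := by
    have h1 : ∑ i ∈ B, variance (Y i) (ℙ : Measure Ω') ≤ ∑ _i ∈ B, D ^ 2 :=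
      Finset.sum_le_sum fun i _ => hvarD i
    have h2 : ∑ i ∈ Bᶜ, variance (Y i) (ℙ : Measure Ω') ≤ ∑ _i ∈ Bᶜ, M ^ 2 * δ ^ 2 :=
      Finset.sum_le_sum fun i hi => hvarI i (Finset.mem_compl.1 hi)
    have h3 : ∑ i, variance (Y i) (ℙ : Measure Ω')
        = ∑ i ∈ B, variance (Y i) (ℙ : Measure Ω')
          + ∑ i ∈ Bᶜ, variance (Y i) (ℙ : Measure Ω') :=
      (Finset.sum_add_sum_compl B _).symm
    have h4 : ∑ _i ∈ B, (D ^ 2 : ℝ) = B.card * D ^ 2 := by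
      rw [Finset.sum_const, nsmul_eq_mul]
    have h5 : ∑ _i ∈ Bᶜ, (M ^ 2 * δ ^ 2 : ℝ) = Bᶜ.card * (M ^ 2 * δ ^ 2) := by
      rw [Finset.sum_const, nsmul_eq_mul]
    have h6 : (Bᶜ.card : ℝ) ≤ n := by
      have h := Finset.card_le_univ Bᶜ
      simp only [Finset.card_univ, Fintype.card_fin] at h
      exact_mod_cast h
    have h7 : (Bᶜ.card : ℝ) * (M ^ 2 * δ ^ 2) ≤ (n : ℝ) * (M ^ 2 * δ ^ 2) :=
      mul_le_mul_of_nonneg_right h6 (by positivity)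
    rw [h3]
    calc ∑ i ∈ B, variance (Y i) (ℙ : Measure Ω')
          + ∑ i ∈ Bᶜ, variance (Y i) (ℙ : Measure Ω')
        ≤ (B.card : ℝ) * D ^ 2 + (Bᶜ.card : ℝ) * (M ^ 2 * δ ^ 2) := by
          rw [← h4, ← h5]; exact add_le_add h1 h2
    _ ≤ (B.card : ℝ) * D ^ 2 + (n : ℝ) * (M ^ 2 * δ ^ 2) := by linarith
  -- decomposition of the variance
  have hdecomp : variance (fun ω => (1 / (n : ℝ)) * ∑ i, f (x i ω)) (ℙ : Measure Ω')
      = (1 / (n : ℝ)) ^ 2 * ∑ i, variance (Y i) (ℙ : Measure Ω') := by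
    rw [variance_const_mul]
    congr 1
    have hfun : (fun ω => ∑ i, f (x i ω)) = ∑ i, Y i := by
      funext ω; rw [Finset.sum_apply]; rfl
    rw [hfun]
    exact IndepFun.variance_sum (fun i _ => hmem i)
      (fun i _ j _ hij => (hindep.comp (fun _ => f) (fun _ => hfm)).indepFun hij)
  rw [hdecomp, hexp]
  rcases le_or_gt N₀ n with hnN | hnN
  · -- large n: count boundary cells via the Minkowski content
    have h2δ : 2 * δ < ε₀ := by
      have h := hN₀ n hnN
      rw [hδdef]
      rw [hν] at *
      linarith
    have hKb : (B.card : ℝ) ≤ (n : ℝ) * ((|MC| + 1) * (2 * (2 * δ))) := by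
      have hsub : (⋃ i ∈ B, E i) ⊆ Metric.cthickening (2 * δ) (frontier S) := by
        intro w hw
        rw [Set.mem_iUnion₂] at hw
        obtain ⟨i, hiB, hwE⟩ := hw
        rw [hBdef, Finset.mem_filter] at hiB
        exact aux_subset_cthickening (hQb.subset (hEQ i))
          (by rw [hδdef, hν]; exact hdiam i) hiB.2.1 hiB.2.2 hwE
      have hμU : volume (⋃ i ∈ B, E i) = (B.card : ℝ≥0∞) * (1 / (n : ℝ≥0∞)) := by
        rw [measure_biUnion_finset (fun i _ j _ hij => hdisj hij) (fun i _ => hEmeas i)]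
        simp only [hvolE, Finset.sum_const, nsmul_eq_mul]
      have hV : volume (Metric.cthickening (2 * δ) (frontier S)) ≠ ⊤ :=
        ((hFb.cthickening (δ := 2 * δ)).measure_lt_top (μ := volume)).ne
      have hle := measure_mono (μ := (volume : Measure (EuclideanSpace ℝ (Fin d)))) hsub
      rw [hμU] at hle
      have hle2 := ENNReal.toReal_mono hV hle
      rw [ENNReal.toReal_mul] at hle2
      simp only [ENNReal.toReal_natCast, ENNReal.toReal_div, ENNReal.toReal_one] at hle2
      have hVb := hε₀ (2 * δ) (by positivity) h2δ
      have hcomb : (B.card : ℝ) * (1 / (n : ℝ)) ≤ (|MC| + 1) * (2 * (2 * δ)) :=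
        le_trans hle2 hVb
      calc (B.card : ℝ) = ((B.card : ℝ) * (1 / (n : ℝ))) * n := by field_simp
      _ ≤ ((|MC| + 1) * (2 * (2 * δ))) * n :=
        mul_le_mul_of_nonneg_right hcomb hn0.le
      _ = (n : ℝ) * ((|MC| + 1) * (2 * (2 * δ))) := by ring
    have h1 : (1 / (n : ℝ)) ^ 2 * ∑ i, variance (Y i) (ℙ : Measure Ω')
        ≤ (1 / (n : ℝ)) ^ 2 *
          (((n : ℝ) * ((|MC| + 1) * (2 * (2 * δ)))) * D ^ 2 + (n : ℝ) * (M ^ 2 * δ ^ 2)) := by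
      apply mul_le_mul_of_nonneg_left _ (by positivity)
      calc ∑ i, variance (Y i) (ℙ : Measure Ω')
          ≤ (B.card : ℝ) * D ^ 2 + (n : ℝ) * (M ^ 2 * δ ^ 2) := hsum
      _ ≤ ((n : ℝ) * ((|MC| + 1) * (2 * (2 * δ)))) * D ^ 2 + (n : ℝ) * (M ^ 2 * δ ^ 2) := by
          have := mul_le_mul_of_nonneg_right hKb (sq_nonneg D)
          linarith
    have h2 : (1 / (n : ℝ)) ^ 2 *
          (((n : ℝ) * ((|MC| + 1) * (2 * (2 * δ)))) * D ^ 2 + (n : ℝ) * (M ^ 2 * δ ^ 2))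
        = (1 / (n : ℝ)) * (((|MC| + 1) * (2 * (2 * δ))) * D ^ 2 + M ^ 2 * δ ^ 2) := by
      field_simp
    have h3 : ((|MC| + 1) * (2 * (2 * δ))) * D ^ 2 + M ^ 2 * δ ^ 2 ≤ ν * C₁ := by
      have e1 : ((|MC| + 1) * (2 * (2 * δ))) * D ^ 2
          = ν * (8 * (|MC| + 1) * Real.sqrt (d + 3) * D ^ 2) := by
        rw [hδdef]; ring
      have e2 : M ^ 2 * δ ^ 2 ≤ ν * (4 * M ^ 2 * ((d : ℝ) + 3)) := by
        have e3 : M ^ 2 * δ ^ 2 = 4 * M ^ 2 * ((d : ℝ) + 3) * ν ^ 2 := by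
          rw [hδdef, show (2 * Real.sqrt (d + 3) * ν) ^ 2
            = 4 * (Real.sqrt ((d : ℝ) + 3) ^ 2) * ν ^ 2 by ring, hsd2]
          ring
        rw [e3]
        have := mul_le_mul_of_nonneg_left hν2 (by positivity : (0:ℝ) ≤ 4 * M ^ 2 * ((d : ℝ) + 3))
        linarith
      rw [hC₁def]
      calc ((|MC| + 1) * (2 * (2 * δ))) * D ^ 2 + M ^ 2 * δ ^ 2
          ≤ ν * (8 * (|MC| + 1) * Real.sqrt (d + 3) * D ^ 2)
            + ν * (4 * M ^ 2 * ((d : ℝ) + 3)) := by rw [e1]; linarith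
      _ = ν * (8 * (|MC| + 1) * Real.sqrt (d + 3) * D ^ 2 + 4 * M ^ 2 * ((d : ℝ) + 3)) := by
          ring
    calc (1 / (n : ℝ)) ^ 2 * ∑ i, variance (Y i) (ℙ : Measure Ω')
        ≤ (1 / (n : ℝ)) * (((|MC| + 1) * (2 * (2 * δ))) * D ^ 2 + M ^ 2 * δ ^ 2) := by
          rw [← h2]; exact h1
    _ ≤ (1 / (n : ℝ)) * (ν * C₁) := mul_le_mul_of_nonneg_left h3 (by positivity)
    _ ≤ (1 / (n : ℝ)) * (ν * (C₁ + D ^ 2 * ((N₀ : ℝ)) ^ ((1 : ℝ) / d))) := by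
        have hnonneg : (0:ℝ) ≤ D ^ 2 * ((N₀ : ℝ)) ^ ((1 : ℝ) / d) := by positivity
        have hC : C₁ ≤ C₁ + D ^ 2 * ((N₀ : ℝ)) ^ ((1 : ℝ) / d) := by linarith
        have h' := mul_le_mul_of_nonneg_left hC hν0.le
        exact mul_le_mul_of_nonneg_left h' (by positivity)
    _ = (C₁ + D ^ 2 * ((N₀ : ℝ)) ^ ((1 : ℝ) / d)) * (1 / (n : ℝ) * ν) := by ring
  · -- small n: trivial bound
    have h1 : ∑ i, variance (Y i) (ℙ : Measure Ω') ≤ (n : ℝ) * D ^ 2 := by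
      calc ∑ i, variance (Y i) (ℙ : Measure Ω') ≤ ∑ _i : Fin n, D ^ 2 :=
            Finset.sum_le_sum fun i _ => hvarD i
      _ = (n : ℝ) * D ^ 2 := by
          rw [Finset.sum_const, nsmul_eq_mul]
          norm_num
    have hνN : 1 ≤ (N₀ : ℝ) ^ ((1 : ℝ) / d) * ν := by
      have hle : (n : ℝ) ≤ N₀ := by exact_mod_cast hnN.le
      have h2 : (n : ℝ) ^ ((1 : ℝ) / d) ≤ (N₀ : ℝ) ^ ((1 : ℝ) / d) :=
        Real.rpow_le_rpow hn0.le hle hdpos.le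
      have h3 : (n : ℝ) ^ ((1 : ℝ) / d) * ν = 1 := by
        rw [hν, ← Real.rpow_add hn0, show (1 : ℝ) / d + -1 / (d : ℝ) = 0 by ring,
          Real.rpow_zero]
      calc (1 : ℝ) = (n : ℝ) ^ ((1 : ℝ) / d) * ν := h3.symm
      _ ≤ (N₀ : ℝ) ^ ((1 : ℝ) / d) * ν := mul_le_mul_of_nonneg_right h2 hν0.le
    have h4 : D ^ 2 ≤ (C₁ + D ^ 2 * ((N₀ : ℝ)) ^ ((1 : ℝ) / d)) * ν := by
      have h5 : D ^ 2 * 1 ≤ D ^ 2 * ((N₀ : ℝ) ^ ((1 : ℝ) / d) * ν) :=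
        mul_le_mul_of_nonneg_left hνN (by positivity)
      nlinarith [mul_nonneg hC₁0 hν0.le]
    calc (1 / (n : ℝ)) ^ 2 * ∑ i, variance (Y i) (ℙ : Measure Ω')
        ≤ (1 / (n : ℝ)) ^ 2 * ((n : ℝ) * D ^ 2) :=
          mul_le_mul_of_nonneg_left h1 (by positivity)
    _ = (1 / (n : ℝ)) * D ^ 2 := by field_simp
    _ ≤ (1 / (n : ℝ)) * ((C₁ + D ^ 2 * ((N₀ : ℝ)) ^ ((1 : ℝ) / d)) * ν) :=
          mul_le_mul_of_nonneg_left h4 (by positivity)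
    _ = (C₁ + D ^ 2 * ((N₀ : ℝ)) ^ ((1 : ℝ) / d)) * (1 / (n : ℝ) * ν) := by ring
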